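/- Equivalence for outcome 1: for reals t ≥ 0, m > 0, g⁺ > 0, with q = ⌊t/m⌋, r = t − qm, and w an integer multiple of g⁺: (t+w)/(m+g⁺) ≤ t/m if and only if w ≤ g⁺·q + g⁺·r/m, which (since 0 ≤ r < m, q ∈ ℤ, w ∈ g⁺ℤ) holds if and only if w ≤ g⁺·q. -/

import Mathlib

open Filter Finset

/-- A (deterministic) martingale on binary strings. -/
def IsMartingale (M : List Bool → ℝ) : Prop :=
  (∀ σ, 0 ≤ M σ) ∧ ∀ σ, 2 * M σ = M (σ ++ [false]) + M (σ ++ [true])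

/-- A supermartingale on binary strings. -/
def IsSupermartingale (M : List Bool → ℝ) : Prop :=
  (∀ σ, 0 ≤ M σ) ∧ ∀ σ, M (σ ++ [false]) + M (σ ++ [true]) ≤ 2 * M σ

/-- The wager of a (super)martingale at σ. -/
noncomputable def wager (M : List Bool → ℝ) (σ : List Bool) : ℝ :=
  (M (σ ++ [true]) - M (σ ++ [false])) / 2

/-- The cover of a supermartingale: the martingale with the same initial
capital and the same wagers. -/
noncomputable def cover (M : List Bool → ℝ) (σ : List Bool) : ℝ :=
  M [] + ∑ i ∈ Finset.range σ.length,
    (if σ.getD i false then wager M (σ.take i) else -wager M (σ.take i))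

/-- The savings of a supermartingale at σ. -/
noncomputable def savings (M : List Bool → ℝ) (σ : List Bool) : ℝ := cover M σ - M σ

/-- The length-`n` prefix of an infinite binary sequence. -/
def pre (X : ℕ → Bool) (n : ℕ) : List Bool := (List.range n).map X

/-- `M` is `g`-granular: each wager at σ is an integer multiple of `2^{-g(|σ|+1)}`. -/
def GranularWagers (g : ℕ → ℕ) (M : List Bool → ℝ) : Prop :=
  ∀ σ, ∃ k : ℤ, wager M σ = k * (2:ℝ) ^ (-(g (σ.length + 1) : ℤ))

/-- Equivalence for outcome 1: the ratio does not increase iff w ≤ g⁺·q + g⁺·r/m iff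
w ≤ g⁺·q, where q, r are the quotient and remainder of t by m. -/
theorem ratio_outcome_one_iff (t m w gp : ℝ) (hm : 0 < m) (hgp : 0 < gp) (ht : 0 ≤ t)
    (hw : ∃ k : ℤ, w = k * gp) :
    ((t + w) / (m + gp) ≤ t / m ↔
        w ≤ gp * ⌊t / m⌋ + gp * (t - ⌊t / m⌋ * m) / m) ∧
      (w ≤ gp * ⌊t / m⌋ + gp * (t - ⌊t / m⌋ * m) / m ↔ w ≤ gp * ⌊t / m⌋) := by
  have hmg : 0 < m + gp := by linarith
  have key : gp * ⌊t / m⌋ + gp * (t - ⌊t / m⌋ * m) / m = gp * t / m := by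
    field_simp; ring
  constructor
  · rw [key, div_le_div_iff₀ hmg hm]
    constructor
    · intro h
      rw [le_div_iff₀ hm]; nlinarith
    · intro h
      rw [le_div_iff₀ hm] at h; nlinarith
  · rw [key]
    constructor
    · intro h
      obtain ⟨k, rfl⟩ := hw
      have hk : (k : ℝ) ≤ t / m := by
        have := (mul_le_mul_iff_right₀ hgp).mp (by rw [mul_div_assoc] at h; linarith : gp * k ≤ gp * (t / m))
        linarith
      have hk2 : (k : ℝ) ≤ ⌊t / m⌋ := by exact_mod_cast Int.le_floor.mpr hk
      calc (k:ℝ) * gp ≤ ⌊t / m⌋ * gp := mul_le_mul_of_nonneg_right hk2 hgp.le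
        _ = gp * ⌊t / m⌋ := by ring
    · intro h
      have : (⌊t / m⌋ : ℝ) ≤ t / m := Int.floor_le _
      calc w ≤ gp * ⌊t / m⌋ := h
        _ ≤ gp * (t / m) := by nlinarith
        _ = gp * t / m := by ring
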